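/- Let n ≥ 2, let a < b, let g_1, …, g_{2n} ∈ C¹[a,b] be linearly independent, let ω be a continuous, strictly positive weight function on [a,b], let a = x_0 < x_1 < … < x_n = b be closed nodes, and suppose σ_1, …, σ_{n−1} and η_0, …, η_n in span{g_1, …, g_{2n}} satisfy the quasi-Hermite–Lagrange conditions: σ_i(x_k) = 0 and η_i(x_k) = δ_{ik} for all k = 0, …, n, and σ_i'(x_k) = δ_{ik} and η_i'(x_k) = 0 for all k = 1, …, n−1 (where i ranges over 1, …, n−1 for the σ_i and over 0, …, n for the η_i). Then there exist weights w_0, …, w_n with ∫_a^b g_j(x)ω(x) dx = Σ_{k=0}^n w_k g_j(x_k) for all j = 1, …, 2n if and only if ∫_a^b σ_i(x)ω(x) dx = 0 for all i = 1, …, n−1; and in that case the weights are necessarily w_i = ∫_a^b η_i(x)ω(x) dx for i = 0, …, n. -/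

import Mathlib

open MeasureTheory

/-- The `k`-th interior node index: `k + 1` as an element of `Fin (n + 1)`,
for `k : Fin (n - 1)`. -/
def interiorIdx (n : ℕ) (k : Fin (n - 1)) : Fin (n + 1) :=
  ⟨(k : ℕ) + 1, by have := k.isLt; omega⟩

/-- Characterisation of generalised Gauss–Lobatto quadrature weights via a
quasi-Hermite–Lagrange basis: given closed nodes `a = x 0 < … < x n = b` and
functions `σ 1, …, σ (n-1)` and `η 0, …, η n` in the span of `g 1, …, g 2n`
satisfying the quasi-Hermite–Lagrange conditions, weights making the closed rule
exact for all `g j` exist iff `∫ σ i ω = 0` for all `i`, in which case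
necessarily `w i = ∫ η i ω`. -/
theorem gauss_lobatto_weights_iff_sigma_integrals_vanish
    (n : ℕ) (hn : 2 ≤ n) (a b : ℝ) (hab : a < b)
    (g : Fin (2 * n) → ℝ → ℝ) (hg : ∀ j, ContDiff ℝ 1 (g j))
    (hgli : LinearIndependent ℝ g)
    (ω : ℝ → ℝ) (hω : ContinuousOn ω (Set.Icc a b))
    (hωpos : ∀ t ∈ Set.Icc a b, 0 < ω t)
    (x : Fin (n + 1) → ℝ) (hx : StrictMono x)
    (hxa : x 0 = a) (hxb : x (Fin.last n) = b)
    (σ : Fin (n - 1) → ℝ → ℝ) (η : Fin (n + 1) → ℝ → ℝ)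
    (hσmem : ∀ i, σ i ∈ Submodule.span ℝ (Set.range g))
    (hηmem : ∀ i, η i ∈ Submodule.span ℝ (Set.range g))
    (hσ0 : ∀ (i : Fin (n - 1)) (k : Fin (n + 1)), σ i (x k) = 0)
    (hσ' : ∀ i k : Fin (n - 1),
      deriv (σ i) (x (interiorIdx n k)) = if i = k then 1 else 0)
    (hη1 : ∀ i k : Fin (n + 1), η i (x k) = if i = k then 1 else 0)
    (hη' : ∀ (i : Fin (n + 1)) (k : Fin (n - 1)),
      deriv (η i) (x (interiorIdx n k)) = 0) :
    ((∃ w : Fin (n + 1) → ℝ, ∀ j, ∫ t in a..b, g j t * ω t = ∑ k, w k * g j (x k)) ↔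
      ∀ i, ∫ t in a..b, σ i t * ω t = 0) ∧
    ∀ w : Fin (n + 1) → ℝ,
      (∀ j, ∫ t in a..b, g j t * ω t = ∑ k, w k * g j (x k)) →
      ∀ i, w i = ∫ t in a..b, η i t * ω t := by
  classical
  set V := Submodule.span ℝ (Set.range g) with hV
  -- every member of V is continuous and differentiable
  have hmem_cont : ∀ f ∈ V, Continuous f ∧ Differentiable ℝ f := by
    intro f hf
    induction hf using Submodule.span_induction with
    | mem f hf =>
        obtain ⟨j, rfl⟩ := hf
        exact ⟨(hg j).continuous, (hg j).differentiable one_ne_zero⟩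
    | zero => exact ⟨continuous_const, differentiable_const 0⟩
    | add f₁ f₂ h₁ h₂ ih₁ ih₂ => exact ⟨ih₁.1.add ih₂.1, ih₁.2.add ih₂.2⟩
    | smul c f hf ih => exact ⟨ih.1.const_smul c, ih.2.const_smul c⟩
  -- integrability
  have hint : ∀ f : ℝ → ℝ, Continuous f →
      IntervalIntegrable (fun t => f t * ω t) volume a b := by
    intro f hf
    apply ContinuousOn.intervalIntegrable
    rw [Set.uIcc_of_le hab.le]
    exact hf.continuousOn.mul hω
  have hintV : ∀ f ∈ V, IntervalIntegrable (fun t => f t * ω t) volume a b :=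
    fun f hf => hint f (hmem_cont f hf).1
  -- integral of a finite linear combination
  have hcomb : ∀ {ι : Type} [Fintype ι] (c : ι → ℝ) (f : ι → ℝ → ℝ),
      (∀ i, f i ∈ V) →
      ∫ t in a..b, (∑ i, c i * f i t) * ω t
        = ∑ i, c i * ∫ t in a..b, f i t * ω t := by
    intro ι _ c f hf
    have : ∀ t, (∑ i, c i * f i t) * ω t = ∑ i, c i * (f i t * ω t) := by
      intro t
      rw [Finset.sum_mul]
      exact Finset.sum_congr rfl fun i _ => by ring
    simp_rw [this]
    rw [intervalIntegral.integral_finset_sum]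
    · exact Finset.sum_congr rfl fun i _ => intervalIntegral.integral_const_mul _ _
    · intro i _
      exact (hintV (f i) (hf i)).const_mul (c i)
  -- key lemma: exactness for g extends to all of V
  have hkey : ∀ (w : Fin (n + 1) → ℝ),
      (∀ j, ∫ t in a..b, g j t * ω t = ∑ k, w k * g j (x k)) →
      ∀ f ∈ V, ∫ t in a..b, f t * ω t = ∑ k, w k * f (x k) := by
    intro w hw f hf
    obtain ⟨c, hc⟩ := (Submodule.mem_span_range_iff_exists_fun ℝ).mp hf
    have hfe : ∀ t, f t = ∑ j, c j * g j t := by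
      intro t
      rw [← hc]; simp
    calc ∫ t in a..b, f t * ω t
        = ∫ t in a..b, (∑ j, c j * g j t) * ω t := by
          congr 1; funext t; rw [hfe]
      _ = ∑ j, c j * ∫ t in a..b, g j t * ω t :=
          hcomb c g fun j => Submodule.subset_span ⟨j, rfl⟩
      _ = ∑ j, c j * ∑ k, w k * g j (x k) := by
          exact Finset.sum_congr rfl fun j _ => by rw [hw j]
      _ = ∑ k, w k * f (x k) := by
          simp_rw [Finset.mul_sum]
          rw [Finset.sum_comm]
          refine Finset.sum_congr rfl fun k _ => ?_
          rw [hfe (x k), Finset.mul_sum]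
          exact Finset.sum_congr rfl fun j _ => by ring
  -- the combined family σ ⊕ η
  set h : (Fin (n - 1) ⊕ Fin (n + 1)) → ℝ → ℝ := Sum.elim σ η with hh
  have hhmem : ∀ i, h i ∈ V := by rintro (i | i) <;> [exact hσmem i; exact hηmem i]
  have hhli : LinearIndependent ℝ h := by
    rw [Fintype.linearIndependent_iff]
    intro c hc
    have hc' : ∀ t : ℝ, (∑ i, c (Sum.inl i) * σ i t) + (∑ k, c (Sum.inr k) * η k t) = 0 := by
      intro t
      have := congrFun hc t
      simpa [hh, Fintype.sum_sum_type, Finset.sum_apply] using this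
    -- η coefficients vanish: evaluate at nodes
    have hη0 : ∀ m : Fin (n + 1), c (Sum.inr m) = 0 := by
      intro m
      have := hc' (x m)
      simpa [hσ0, hη1, Finset.sum_ite_eq] using this
    -- then the σ part is the zero function
    have hσzero : ∀ t : ℝ, (∑ i, c (Sum.inl i) * σ i t) = 0 := by
      intro t
      have := hc' t
      simpa [hη0] using this
    have hσ0' : ∀ m : Fin (n - 1), c (Sum.inl m) = 0 := by
      intro m
      set pt := x (interiorIdx n m) with hpt
      have hd1 : HasDerivAt (fun t => ∑ i, c (Sum.inl i) * σ i t)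
          (∑ i, c (Sum.inl i) * deriv (σ i) pt) pt := by
        apply HasDerivAt.fun_sum
        intro i _
        exact ((hmem_cont (σ i) (hσmem i)).2 pt).hasDerivAt.const_mul (c (Sum.inl i))
      have hd2 : HasDerivAt (fun t => ∑ i, c (Sum.inl i) * σ i t) 0 pt := by
        have : (fun t => ∑ i, c (Sum.inl i) * σ i t) = fun _ => (0 : ℝ) := funext hσzero
        rw [this]; exact hasDerivAt_const _ _
      have := hd1.unique hd2
      rw [Finset.sum_congr rfl (fun i _ => by rw [hσ' i m])] at this
      simpa [Finset.sum_ite_eq] using this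
    rintro (i | i)
    · exact hσ0' i
    · exact hη0 i
  -- span of h equals V
  haveI : Module.Finite ℝ V := Module.Finite.span_of_finite ℝ (Set.finite_range g)
  have hspan : Submodule.span ℝ (Set.range h) = V := by
    apply Submodule.eq_of_le_of_finrank_le
    · rw [hV, Submodule.span_le]
      rintro f ⟨i, rfl⟩
      exact hhmem i
    · rw [finrank_span_eq_card hhli, finrank_span_eq_card hgli]
      simp only [Fintype.card_sum, Fintype.card_fin]
      omega
  -- second key lemma: if σ integrals vanish, integral of f ∈ V via η weights
  have hkey2 : (∀ i, ∫ t in a..b, σ i t * ω t = 0) →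
      ∀ f ∈ V, ∫ t in a..b, f t * ω t
        = ∑ k, (∫ t in a..b, η k t * ω t) * f (x k) := by
    intro hσint f hf
    rw [← hspan] at hf
    obtain ⟨c, hc⟩ := (Submodule.mem_span_range_iff_exists_fun ℝ).mp hf
    have hfe : ∀ t, f t = (∑ i, c (Sum.inl i) * σ i t) + (∑ k, c (Sum.inr k) * η k t) := by
      intro t
      conv_lhs => rw [← hc]
      simp [hh, Fintype.sum_sum_type, Finset.sum_apply]
    have hfx : ∀ m : Fin (n + 1), f (x m) = c (Sum.inr m) := by
      intro m
      rw [hfe]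
      simp [hσ0, hη1, Finset.sum_ite_eq]
    have hint1 : ∫ t in a..b, f t * ω t = ∑ k, c (Sum.inr k) * ∫ t in a..b, η k t * ω t := by
      have hfe' : ∀ t, f t = ∑ i : Fin (n - 1) ⊕ Fin (n + 1),
          c i * h i t := by
        intro t
        rw [hfe t, Fintype.sum_sum_type]
        simp [hh]
      calc ∫ t in a..b, f t * ω t
          = ∫ t in a..b, (∑ i, c i * h i t) * ω t := by
            congr 1; funext t; rw [hfe' t]
        _ = ∑ i, c i * ∫ t in a..b, h i t * ω t := hcomb c h hhmem
        _ = ∑ k, c (Sum.inr k) * ∫ t in a..b, η k t * ω t := by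
            rw [Fintype.sum_sum_type]
            have : ∀ i : Fin (n - 1), c (Sum.inl i) * ∫ t in a..b, h (.inl i) t * ω t = 0 := by
              intro i
              simp [hh, hσint i]
            simp only [this, Finset.sum_const_zero, zero_add]
            rfl
    rw [hint1]
    exact Finset.sum_congr rfl fun k _ => by rw [hfx k]; ring
  constructor
  · constructor
    · rintro ⟨w, hw⟩ i
      have := hkey w hw (σ i) (hσmem i)
      simpa [hσ0] using this
    · intro hσint
      refine ⟨fun k => ∫ t in a..b, η k t * ω t, fun j => ?_⟩
      exact hkey2 hσint (g j) (Submodule.subset_span ⟨j, rfl⟩)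
  · intro w hw i
    have := hkey w hw (η i) (hηmem i)
    rw [this]
    simp [hη1, Finset.sum_ite_eq]
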